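/- Let F be a nonarchimedean local field, G = GL(2,F), K = GL(2,O_F), B^+ = union over n in N of B_0 Z t^n, omega = the matrix (0 1; p_F 0), and I the Iwahori subgroup of K. Then: (1) (B - B^+) K = omega B^+ K; (2) G is the disjoint union of B^+ K and omega B^+ K; (3) both B^+ K and omega B^+ K are stable under left multiplication by I. -/

import Mathlib

noncomputable section
attribute [local instance] Classical.propDecidable
open Pointwise


/-! ### Generalities on smooth representations over a commutative ring `o` -/

section RepPrelim

variable (o : Type) [CommRing o]

/-- The `o`-submodule of `V` generated by `{s • w | s ∈ S, w ∈ W}`; written `<S W>` in the paper. -/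
def gspan {H : Type} (V : Type) [AddCommGroup V] [Module o V] [SMul H V]
    (S : Set H) (W : Set V) : Submodule o V :=
  Submodule.span o {v : V | ∃ s ∈ S, ∃ w ∈ W, v = s • w}

/-- A submodule `N` is stable under the set `S` of group elements. -/
def IsStableSub {H : Type} (V : Type) [AddCommGroup V] [Module o V] [SMul H V]
    (S : Set H) (N : Submodule o V) : Prop :=
  ∀ s ∈ S, ∀ v ∈ N, s • v ∈ N

/-- `N` is a finitely generated module over `o[S]`. -/
def IsFGOver {H : Type} (V : Type) [AddCommGroup V] [Module o V] [SMul H V]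
    (S : Set H) (N : Submodule o V) : Prop :=
  ∃ X : Finset V, (X : Set V) ⊆ (N : Set V) ∧ N = gspan o V S (X : Set V)

/-- The submodule of `S`-invariants. -/
def invariantsSub (H : Type) [Group H] (V : Type) [AddCommGroup V] [Module o V]
    [DistribMulAction H V] [SMulCommClass H o V] (S : Set H) : Submodule o V where
  carrier := {v | ∀ s ∈ S, s • v = v}
  add_mem' := by intro a b ha hb s hs; rw [smul_add, ha s hs, hb s hs]
  zero_mem' := by intro s hs; exact smul_zero s
  smul_mem' := by intro c v hv s hs; rw [smul_comm, hv s hs]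

/-- The action of a fixed group element as an `o`-linear map. -/
def actLin (H : Type) [Group H] (V : Type) [AddCommGroup V] [Module o V]
    [DistribMulAction H V] [SMulCommClass H o V] (g : H) : V →ₗ[o] V where
  toFun v := g • v
  map_add' := smul_add g
  map_smul' c v := by simpa using smul_comm g c v

/-- `V` has finite length as an `o[H]`-module: it admits a composition series of
`H`-stable `o`-submodules. -/
def IsFiniteLengthRep (H : Type) [Group H] (V : Type) [AddCommGroup V] [Module o V]
    [DistribMulAction H V] : Prop :=
  ∃ (n : ℕ) (c : Fin (n + 1) → Submodule o V),
    c 0 = ⊥ ∧ c (Fin.last n) = ⊤ ∧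
    (∀ i, IsStableSub o V (Set.univ : Set H) (c i)) ∧
    (∀ i : Fin n, c i.castSucc < c i.succ) ∧
    (∀ i : Fin n, ∀ N : Submodule o V, IsStableSub o V (Set.univ : Set H) N →
      c i.castSucc ≤ N → N ≤ c i.succ → N = c i.castSucc ∨ N = c i.succ)

/-- Smoothness: each vector has open stabilizer. -/
def IsSmoothRep (H : Type) [Group H] [TopologicalSpace H] (V : Type) [AddCommGroup V]
    [Module o V] [DistribMulAction H V] : Prop :=
  ∀ v : V, IsOpen {h : H | h • v = v}

/-- Admissibility: invariants under any compact open subgroup form a f.g. `o`-module. -/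
def IsAdmissibleRep (H : Type) [Group H] [TopologicalSpace H] (V : Type) [AddCommGroup V]
    [Module o V] [DistribMulAction H V] [SMulCommClass H o V] : Prop :=
  ∀ H' : Subgroup H, IsCompact (H' : Set H) → IsOpen (H' : Set H) →
    (invariantsSub o H V (H' : Set H)).FG

end RepPrelim

/-! ### Compact induction `ind_{S}^{H}(V₀)` and finite presentations -/

section Induction

variable (o : Type) [CommRing o]
variable {H : Type} [Group H] {V : Type} [AddCommGroup V] [Module o V]
variable [DistribMulAction H V] [SMulCommClass H o V]

/-- The compact induction `ind_S^H (V₀)`, realized as the `o`-module of functions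
`f : H → V` with values in `V₀`, satisfying `f (s * h) = s • f h` for `s ∈ S`, and
supported on finitely many right cosets `S * x`. -/
def Ind (S : Subgroup H) (V0 : Submodule o V) : Submodule o (H → V) where
  carrier := {f | (∀ h, f h ∈ V0) ∧ (∀ s ∈ S, ∀ h, f (s * h) = s • f h) ∧
      ∃ X : Finset H, ∀ h, f h ≠ 0 → ∃ s ∈ S, ∃ x ∈ X, h = s * x}
  add_mem' := by
    rintro f g ⟨hf1, hf2, Xf, hXf⟩ ⟨hg1, hg2, Xg, hXg⟩
    refine ⟨fun h => V0.add_mem (hf1 h) (hg1 h),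
      fun s hs h => by simp only [Pi.add_apply, hf2 s hs h, hg2 s hs h, smul_add],
      Xf ∪ Xg, fun h hh => ?_⟩
    by_cases hf : f h = 0
    · have hg : g h ≠ 0 := fun h0 => hh (by simp [Pi.add_apply, hf, h0])
      obtain ⟨s, hs, x, hx, hxx⟩ := hXg h hg
      exact ⟨s, hs, x, Finset.mem_union_right _ hx, hxx⟩
    · obtain ⟨s, hs, x, hx, hxx⟩ := hXf h hf
      exact ⟨s, hs, x, Finset.mem_union_left _ hx, hxx⟩
  zero_mem' :=
    ⟨fun _ => V0.zero_mem, fun s _ _ => (smul_zero s).symm, ∅, fun h hh => absurd rfl hh⟩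
  smul_mem' := by
    rintro c f ⟨hf1, hf2, Xf, hXf⟩
    refine ⟨fun h => V0.smul_mem c (hf1 h),
      fun s hs h => by
        simp only [Pi.smul_apply, hf2 s hs h]
        exact (smul_comm s c (f h)).symm,
      Xf, fun h hh => hXf h (fun h0 => hh (by simp [Pi.smul_apply, h0]))⟩

variable {S : Subgroup H} {V0 : Submodule o V}

/-- Right translation, giving the `H`-action on the compact induction. -/
def indTrans (g : H) (f : H → V) : H → V := fun h => f (h * g)

lemma indTrans_mem (g : H) {f : H → V} (hf : f ∈ Ind o S V0) : indTrans g f ∈ Ind o S V0 := by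
  obtain ⟨h1, h2, X, hX⟩ := hf
  refine ⟨fun h => h1 _, fun s hs h => by
      simpa [indTrans, mul_assoc] using h2 s hs (h * g),
    X.image (· * g⁻¹), fun h hh => ?_⟩
  obtain ⟨s, hs, x, hx, hxx⟩ := hX (h * g) hh
  refine ⟨s, hs, x * g⁻¹, Finset.mem_image_of_mem _ hx, ?_⟩
  rw [← mul_assoc, ← hxx, mul_assoc, mul_inv_cancel, mul_one]

instance : SMul H (Ind o S V0) :=
  ⟨fun g f => ⟨indTrans g (f : H → V), indTrans_mem o g f.2⟩⟩

lemma ind_smul_apply (g : H) (f : Ind o S V0) (h : H) :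
    ((g • f : Ind o S V0) : H → V) h = (f : H → V) (h * g) := rfl

instance : MulAction H (Ind o S V0) where
  one_smul f := Subtype.ext (funext fun h => by simp [ind_smul_apply])
  mul_smul g1 g2 f := Subtype.ext (funext fun h => by simp [ind_smul_apply, mul_assoc])

instance : DistribMulAction H (Ind o S V0) where
  smul_add g f1 f2 := Subtype.ext (funext fun h => rfl)
  smul_zero g := Subtype.ext (funext fun h => rfl)

instance : SMulCommClass H o (Ind o S V0) :=
  ⟨fun g c f => Subtype.ext (funext fun h => rfl)⟩

/-- The function `[1, v]` supported on `S`, with value `v` at `1`. -/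
def unitFn (S : Subgroup H) (v : V) : H → V := fun h => if h ∈ S then h • v else 0

lemma unitFn_mem (hst : IsStableSub o V (S : Set H) V0) {v : V} (hv : v ∈ V0) :
    unitFn S v ∈ Ind o S V0 := by
  refine ⟨fun h => ?_, fun s hs h => ?_, {1}, fun h hh => ?_⟩
  · by_cases h1 : h ∈ S
    · simpa [unitFn, h1] using hst h h1 v hv
    · simp [unitFn, h1, V0.zero_mem]
  · by_cases h1 : h ∈ S
    · have hsh : s * h ∈ S := S.mul_mem hs h1
      simp [unitFn, h1, hsh, mul_smul]
    · have hsh : s * h ∉ S := fun hc => h1 (by simpa using S.mul_mem (S.inv_mem hs) hc)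
      simp [unitFn, h1, hsh]
  · by_cases h1 : h ∈ S
    · exact ⟨h, h1, 1, Finset.mem_singleton_self 1, (mul_one h).symm⟩
    · simp [unitFn, h1] at hh

/-- The element `[1, v]` of the compact induction. -/
def unitElt (hst : IsStableSub o V (S : Set H) V0) {v : V} (hv : v ∈ V0) : Ind o S V0 :=
  ⟨unitFn S v, unitFn_mem o hst hv⟩

/-- `P` is the natural presentation map `ind_S^H (V₀) → V`: it is `H`-equivariant and sends
`[1, v]` to `v`. -/
def IsPresMap (hst : IsStableSub o V (S : Set H) V0) (P : Ind o S V0 →ₗ[o] V) : Prop :=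
  (∀ (g : H) (f : Ind o S V0), P (g • f) = g • P f) ∧
  (∀ v (hv : v ∈ V0), P (unitElt o hst hv) = v)

end Induction

/-- `V₀ ⊆ V` yields a finite presentation `ind_S^H (V₀) → V`: `V₀` is an `S`-stable
`o`-submodule, finitely generated over `o[S]`, generating `V` over `o[H]`, and the kernel of
the natural presentation map is finitely generated over `o[H]`. -/
def FinitelyPresentedVia (o : Type) [CommRing o] {H : Type} [Group H] {V : Type}
    [AddCommGroup V] [Module o V] [DistribMulAction H V] [SMulCommClass H o V]
    (S : Subgroup H) (V0 : Submodule o V) : Prop :=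
  ∃ hst : IsStableSub o V (S : Set H) V0,
    IsFGOver o V (S : Set H) V0 ∧ gspan o V (Set.univ : Set H) (V0 : Set V) = ⊤ ∧
    ∃ P : Ind o S V0 →ₗ[o] V, IsPresMap o hst P ∧
      IsFGOver o (Ind o S V0) (Set.univ : Set H) (LinearMap.ker P)

/-- `V` is of finite presentation relative to the open subgroup `S`. -/
def HasFinitePres (o : Type) [CommRing o] {H : Type} [Group H] (V : Type)
    [AddCommGroup V] [Module o V] [DistribMulAction H V] [SMulCommClass H o V]
    (S : Subgroup H) : Prop :=
  ∃ V0 : Submodule o V, FinitelyPresentedVia o S V0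


/-! ### The group `GL(2,F)` over a nonarchimedean local field `F` -/

open Matrix

/-- Bundle of data making the field `F` a nonarchimedean local field: the valuation
ring `O`, a uniformizer `ϖ` generating the maximal ideal, finiteness of the residue
field, compatibility of the topology with the valuation, and local compactness
(equivalently, completeness). -/
structure NALF (F : Type) [Field F] [TopologicalSpace F] [IsTopologicalRing F] where
  O : Subring F
  isValRing : ∀ x : F, x ≠ 0 → x ∈ O ∨ x⁻¹ ∈ O
  ϖ : F
  ϖ_mem : ϖ ∈ O
  ϖ_ne_zero : ϖ ≠ 0
  ϖ_not_unit : ϖ⁻¹ ∉ O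
  ϖ_gen : ∀ x ∈ O, x⁻¹ ∉ O → x / ϖ ∈ O
  residue_finite : Finite (↥O ⧸ Ideal.span {(⟨ϖ, ϖ_mem⟩ : ↥O)})
  nhds_zero : ∀ s : Set F, s ∈ nhds (0 : F) ↔ ∃ n : ℕ, {x : F | ∃ y ∈ O, x = ϖ ^ n * y} ⊆ s
  locallyCompact : LocallyCompactSpace F

variable (F : Type) [Field F]

lemma GL2.inv_entry_ne (g : GL (Fin 2) F)
    (hg : (g : Matrix (Fin 2) (Fin 2) F) 1 0 = 0) :
    ((g⁻¹ : GL (Fin 2) F) : Matrix (Fin 2) (Fin 2) F) 1 0 = 0 := by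
  have hAC : (g : Matrix (Fin 2) (Fin 2) F) * ((g⁻¹ : GL (Fin 2) F) : Matrix (Fin 2) (Fin 2) F)
      = 1 := by
    rw [← Units.val_mul, mul_inv_cancel, Units.val_one]
  have h1 : ((g : Matrix (Fin 2) (Fin 2) F) *
      ((g⁻¹ : GL (Fin 2) F) : Matrix (Fin 2) (Fin 2) F)) 1 0 = 0 := by
    rw [hAC]; exact Matrix.one_apply_ne (by decide)
  have h2 : ((g : Matrix (Fin 2) (Fin 2) F) *
      ((g⁻¹ : GL (Fin 2) F) : Matrix (Fin 2) (Fin 2) F)) 1 1 = 1 := by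
    rw [hAC]; exact Matrix.one_apply_eq 1
  rw [Matrix.mul_apply, Fin.sum_univ_two, hg, zero_mul, zero_add] at h1
  rw [Matrix.mul_apply, Fin.sum_univ_two, hg, zero_mul, zero_add] at h2
  rcases mul_eq_zero.mp h1 with h | h
  · exact absurd h2 (by rw [h, zero_mul]; exact zero_ne_one)
  · exact h

/-- The upper triangular (Borel) subgroup `B ⊆ GL(2,F)`. -/
def Bgr : Subgroup (GL (Fin 2) F) where
  carrier := {g | (g : Matrix (Fin 2) (Fin 2) F) 1 0 = 0}
  one_mem' := by
    show ((1 : GL (Fin 2) F) : Matrix (Fin 2) (Fin 2) F) 1 0 = 0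
    rw [Units.val_one]; exact Matrix.one_apply_ne (by decide)
  mul_mem' := by
    intro a b ha hb
    show ((a * b : GL (Fin 2) F) : Matrix (Fin 2) (Fin 2) F) 1 0 = 0
    rw [Units.val_mul, Matrix.mul_apply, Fin.sum_univ_two]
    simp only [Set.mem_setOf_eq] at ha hb
    rw [ha, hb, zero_mul, mul_zero, add_zero]
  inv_mem' := by
    intro a ha
    exact GL2.inv_entry_ne F a ha

/-- The maximal compact subgroup `K = GL(2, O_F)` of `GL(2,F)`. -/
def Kgr (O : Subring F) : Subgroup (GL (Fin 2) F) where
  carrier := {g | (∀ i j, (g : Matrix (Fin 2) (Fin 2) F) i j ∈ O) ∧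
      (∀ i j, ((g⁻¹ : GL (Fin 2) F) : Matrix (Fin 2) (Fin 2) F) i j ∈ O)}
  one_mem' := by
    constructor <;>
    · intro i j
      simp only [inv_one, Units.val_one]
      by_cases h : i = j
      · rw [h, Matrix.one_apply_eq]; exact O.one_mem
      · rw [Matrix.one_apply_ne h]; exact O.zero_mem
  mul_mem' := by
    rintro a b ⟨ha1, ha2⟩ ⟨hb1, hb2⟩
    constructor
    · intro i j
      rw [Units.val_mul, Matrix.mul_apply]
      exact Subring.sum_mem O fun k _ => O.mul_mem (ha1 i k) (hb1 k j)
    · intro i j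
      rw [_root_.mul_inv_rev, Units.val_mul, Matrix.mul_apply]
      exact Subring.sum_mem O fun k _ => O.mul_mem (hb2 i k) (ha2 k j)
  inv_mem' := by
    rintro a ⟨ha1, ha2⟩
    refine ⟨ha2, ?_⟩
    rw [inv_inv]
    exact ha1

/-- For a subgroup `A` of a group `G`, the subgroup `A · Z(G)`. -/
def centMul {G : Type} [Group G] (A : Subgroup G) : Subgroup G where
  carrier := {g | ∃ a ∈ A, ∃ z ∈ Subgroup.center G, g = a * z}
  one_mem' := ⟨1, A.one_mem, 1, (Subgroup.center G).one_mem, (one_mul 1).symm⟩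
  mul_mem' := by
    rintro x y ⟨a, ha, z, hz, rfl⟩ ⟨a', ha', z', hz', rfl⟩
    refine ⟨a * a', A.mul_mem ha ha', z * z', (Subgroup.center G).mul_mem hz hz', ?_⟩
    have hcz : a' * z = z * a' := Subgroup.mem_center_iff.mp hz a'
    calc a * z * (a' * z') = a * (z * a' * z') := by
          rw [mul_assoc]; rw [mul_assoc z a' z']
      _ = a * (a' * z * z') := by rw [← hcz]
      _ = a * a' * (z * z') := by rw [mul_assoc a a']; rw [mul_assoc a' z z']
  inv_mem' := by
    rintro x ⟨a, ha, z, hz, rfl⟩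
    refine ⟨a⁻¹, A.inv_mem ha, z⁻¹, (Subgroup.center G).inv_mem hz, ?_⟩
    rw [_root_.mul_inv_rev]
    exact (Subgroup.mem_center_iff.mp ((Subgroup.center G).inv_mem hz) a⁻¹).symm

variable [TopologicalSpace F] [IsTopologicalRing F] (L : NALF F)

/-- The element `t = diag(ϖ, 1)`. -/
def tGL : GL (Fin 2) F :=
  Matrix.GeneralLinearGroup.mkOfDetNeZero !![L.ϖ, 0; 0, 1]
    (by rw [Matrix.det_fin_two_of]; simpa using L.ϖ_ne_zero)

lemma tGL_val : (tGL F L : Matrix (Fin 2) (Fin 2) F) = !![L.ϖ, 0; 0, 1] := rfl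

/-- The unipotent element `u(x) = (1 x; 0 1)`. -/
def uGL (x : F) : GL (Fin 2) F :=
  Matrix.GeneralLinearGroup.mkOfDetNeZero !![1, x; 0, 1]
    (by rw [Matrix.det_fin_two_of]; simp)

lemma uGL_val (x : F) : (uGL F x : Matrix (Fin 2) (Fin 2) F) = !![1, x; 0, 1] := rfl

/-- The element `ω = (0 1; ϖ 0)`. -/
def ωGL : GL (Fin 2) F :=
  Matrix.GeneralLinearGroup.mkOfDetNeZero !![0, 1; L.ϖ, 0]
    (by rw [Matrix.det_fin_two_of]; simpa using L.ϖ_ne_zero)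

lemma ωGL_val : (ωGL F L : Matrix (Fin 2) (Fin 2) F) = !![0, 1; L.ϖ, 0] := rfl

/-- `B₀ = B ∩ K`: integral upper triangular matrices with unit diagonal. -/
def B0gr : Subgroup (GL (Fin 2) F) := Bgr F ⊓ Kgr F L.O

/-- The subgroup `KZ`. -/
def KZgr : Subgroup (GL (Fin 2) F) := centMul (Kgr F L.O)

/-- The subgroup `B₀Z`. -/
def B0Zgr : Subgroup (GL (Fin 2) F) := centMul (B0gr F L)

/-- The monoid `B⁺ = ⋃ₙ B₀ Z tⁿ`, as a subset of `GL(2,F)`. -/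
def BplusGL : Set (GL (Fin 2) F) :=
  {g | ∃ b ∈ B0Zgr F L, ∃ n : ℕ, g = b * (tGL F L) ^ n}

lemma tGL_mem_Bgr : tGL F L ∈ Bgr F := by
  show (tGL F L : Matrix (Fin 2) (Fin 2) F) 1 0 = 0
  rw [tGL_val]
  simp

lemma uGL_mem_Bgr (x : F) : uGL F x ∈ Bgr F := by
  show (uGL F x : Matrix (Fin 2) (Fin 2) F) 1 0 = 0
  rw [uGL_val]
  simp

/-- `t` as an element of `B`. -/
def tB : ↥(Bgr F) := ⟨tGL F L, tGL_mem_Bgr F L⟩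

/-- `u(x)` as an element of `B`. -/
def uB (x : F) : ↥(Bgr F) := ⟨uGL F x, uGL_mem_Bgr F x⟩

/-- The monoid `B⁺` as a subset of `B`. -/
def BplusB : Set ↥(Bgr F) := {b | (b : GL (Fin 2) F) ∈ BplusGL F L}

/-- The subgroup `B₀Z` of `B`. -/
def B0Zb : Subgroup ↥(Bgr F) := (B0Zgr F L).comap (Bgr F).subtype

/-- The subgroup `B ∩ KZ` of `B`. -/
def BcapKZb : Subgroup ↥(Bgr F) := (KZgr F L).comap (Bgr F).subtype

/-- The compact group `U₀ = U(O_F)` of integral upper unipotent matrices, as a subset. -/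
def U0set : Set (GL (Fin 2) F) :=
  {g | (g : Matrix (Fin 2) (Fin 2) F) 0 0 = 1 ∧ (g : Matrix (Fin 2) (Fin 2) F) 1 1 = 1 ∧
    (g : Matrix (Fin 2) (Fin 2) F) 1 0 = 0 ∧ (g : Matrix (Fin 2) (Fin 2) F) 0 1 ∈ L.O}

/-- `U_m = U(p_F^m O_F)`, as a subset of `GL(2,F)`. -/
def UmSet (m : ℕ) : Set (GL (Fin 2) F) :=
  {g | (g : Matrix (Fin 2) (Fin 2) F) 0 0 = 1 ∧ (g : Matrix (Fin 2) (Fin 2) F) 1 1 = 1 ∧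
    (g : Matrix (Fin 2) (Fin 2) F) 1 0 = 0 ∧
    ∃ y ∈ L.O, (g : Matrix (Fin 2) (Fin 2) F) 0 1 = L.ϖ ^ m * y}

/-- `U_m⁻ = U⁻(p_F^m O_F)`, the lower unipotent congruence subgroups, as a subset. -/
def UmMinusSet (m : ℕ) : Set (GL (Fin 2) F) :=
  {g | (g : Matrix (Fin 2) (Fin 2) F) 0 0 = 1 ∧ (g : Matrix (Fin 2) (Fin 2) F) 1 1 = 1 ∧
    (g : Matrix (Fin 2) (Fin 2) F) 0 1 = 0 ∧
    ∃ y ∈ L.O, (g : Matrix (Fin 2) (Fin 2) F) 1 0 = L.ϖ ^ m * y}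

/-- `T₀ = T(O_F)`: diagonal matrices with unit entries in `O_F`, as a subset. -/
def T0set : Set (GL (Fin 2) F) :=
  {g | (g : Matrix (Fin 2) (Fin 2) F) 1 0 = 0 ∧ (g : Matrix (Fin 2) (Fin 2) F) 0 1 = 0 ∧
    (g : Matrix (Fin 2) (Fin 2) F) 0 0 ∈ L.O ∧ ((g : Matrix (Fin 2) (Fin 2) F) 0 0)⁻¹ ∈ L.O ∧
    (g : Matrix (Fin 2) (Fin 2) F) 1 1 ∈ L.O ∧ ((g : Matrix (Fin 2) (Fin 2) F) 1 1)⁻¹ ∈ L.O}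

/-- The Iwahori subgroup `I ⊆ K`, as a subset: integral matrices whose reduction is
upper triangular. -/
def Iset : Set (GL (Fin 2) F) :=
  {g | g ∈ Kgr F L.O ∧ ∃ y ∈ L.O, (g : Matrix (Fin 2) (Fin 2) F) 1 0 = L.ϖ * y}

/-- The pro-`p` Iwahori subgroup `I₁ ⊆ I`, as a subset: integral matrices whose
reduction is upper unipotent. -/
def I1set : Set (GL (Fin 2) F) :=
  {g | g ∈ Kgr F L.O ∧ (∃ y ∈ L.O, (g : Matrix (Fin 2) (Fin 2) F) 1 0 = L.ϖ * y) ∧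
    (∃ y ∈ L.O, (g : Matrix (Fin 2) (Fin 2) F) 0 0 - 1 = L.ϖ * y) ∧
    (∃ y ∈ L.O, (g : Matrix (Fin 2) (Fin 2) F) 1 1 - 1 = L.ϖ * y)}

/-- The set `IZ`. -/
def IZset : Set (GL (Fin 2) F) :=
  {g | ∃ i ∈ Iset F L, ∃ z ∈ Subgroup.center (GL (Fin 2) F), g = i * z}

/-- The set `ωIZ`. -/
def ωIZset : Set (GL (Fin 2) F) := {g | ∃ h ∈ IZset F L, g = ωGL F L * h}

/-! ### Auxiliary development for Statement 13 -/

section St13Aux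

variable {F : Type} [Field F] [TopologicalSpace F] [IsTopologicalRing F]

namespace St13

/-- `Dv L y x` : `y` divides `x` in the valuation sense, i.e. `v x ≥ v y`. -/
def Dv (L : NALF F) (y x : F) : Prop := ∃ o ∈ L.O, x = o * y

variable (L : NALF F)

lemma dv_refl (x : F) : Dv L x x := ⟨1, L.O.one_mem, (one_mul x).symm⟩

lemma dv_zero (y : F) : Dv L y 0 := ⟨0, L.O.zero_mem, (zero_mul y).symm⟩

lemma dv_zero_left {x : F} (h : Dv L 0 x) : x = 0 := by
  obtain ⟨o, _, rfl⟩ := h; exact mul_zero o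

lemma dv_trans {x y z : F} (h1 : Dv L x y) (h2 : Dv L y z) : Dv L x z := by
  obtain ⟨o, ho, rfl⟩ := h1; obtain ⟨o', ho', rfl⟩ := h2
  exact ⟨o' * o, L.O.mul_mem ho' ho, (mul_assoc _ _ _).symm⟩

lemma dv_add {x y z : F} (h1 : Dv L x y) (h2 : Dv L x z) : Dv L x (y + z) := by
  obtain ⟨o, ho, rfl⟩ := h1; obtain ⟨o', ho', rfl⟩ := h2
  exact ⟨o + o', L.O.add_mem ho ho', (add_mul _ _ _).symm⟩

lemma dv_smul {x y : F} (o : F) (ho : o ∈ L.O) (h : Dv L x y) : Dv L x (o * y) := by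
  obtain ⟨o', h', rfl⟩ := h
  exact ⟨o * o', L.O.mul_mem ho h', (mul_assoc _ _ _).symm⟩

lemma dv_neg {x y : F} (h : Dv L x y) : Dv L x (-y) := by
  obtain ⟨o, ho, rfl⟩ := h; exact ⟨-o, L.O.neg_mem ho, (neg_mul _ _).symm⟩

lemma dv_sub {x y z : F} (h1 : Dv L x y) (h2 : Dv L x z) : Dv L x (y - z) := by
  rw [sub_eq_add_neg]; exact dv_add L h1 (dv_neg L h2)

lemma dv_total (x y : F) : Dv L x y ∨ Dv L y x := by
  by_cases hx : x = 0
  · subst hx; exact Or.inr (dv_zero L y)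
  by_cases hy : y = 0
  · subst hy; exact Or.inl (dv_zero L x)
  rcases L.isValRing (y / x) (div_ne_zero hy hx) with h | h
  · exact Or.inl ⟨y / x, h, (div_mul_cancel₀ y hx).symm⟩
  · rw [inv_div] at h
    exact Or.inr ⟨x / y, h, (div_mul_cancel₀ x hy).symm⟩

lemma dv_strict {x y : F} (h : ¬ Dv L x y) : Dv L (L.ϖ * y) x := by
  by_cases hy : y = 0
  · exact absurd (hy ▸ dv_zero L x) h
  by_cases hx : x = 0
  · exact hx ▸ dv_zero L _
  have h1 : y / x ∉ L.O := fun ho => h ⟨y / x, ho, (div_mul_cancel₀ y hx).symm⟩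
  have h2 : x / y ∈ L.O := by
    rcases L.isValRing (y / x) (div_ne_zero hy hx) with h' | h'
    · exact absurd h' h1
    · rwa [inv_div] at h'
  have h3 : (x / y)⁻¹ ∉ L.O := by rwa [inv_div]
  refine ⟨x / y / L.ϖ, L.ϖ_gen _ h2 h3, ?_⟩
  rw [div_div, mul_comm L.ϖ y]
  exact (div_mul_cancel₀ x (mul_ne_zero hy L.ϖ_ne_zero)).symm

/-- `u` is a unit of the valuation ring. -/
def unitO (L : NALF F) (u : F) : Prop := u ∈ L.O ∧ u⁻¹ ∈ L.O ∧ u ≠ 0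

lemma unitO_one : unitO L 1 := ⟨L.O.one_mem, by simpa using L.O.one_mem, one_ne_zero⟩

lemma unit_or_pdvd {x : F} (hx : x ∈ L.O) : unitO L x ∨ Dv L L.ϖ x := by
  by_cases h0 : x = 0
  · exact Or.inr (h0 ▸ dv_zero L _)
  by_cases hi : x⁻¹ ∈ L.O
  · exact Or.inl ⟨hx, hi, h0⟩
  · exact Or.inr ⟨x / L.ϖ, L.ϖ_gen x hx hi,
      (div_mul_cancel₀ x L.ϖ_ne_zero).symm⟩

lemma not_unit_pdvd {x : F} (hu : unitO L x) (hd : Dv L L.ϖ x) : False := by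
  obtain ⟨o, ho, rfl⟩ := hd
  have ho0 : o ≠ 0 := fun h => hu.2.2 (by simp [h])
  have he : L.ϖ⁻¹ = o * (o * L.ϖ)⁻¹ := by
    rw [mul_inv, ← mul_assoc, mul_inv_cancel₀ ho0, one_mul]
  exact L.ϖ_not_unit (he ▸ L.O.mul_mem ho hu.2.1)

lemma dv_unit_iff {u : F} (hu : unitO L u) (x y : F) : Dv L (u * x) y ↔ Dv L x y := by
  constructor
  · rintro ⟨o, ho, rfl⟩; exact ⟨o * u, L.O.mul_mem ho hu.1, by ring⟩
  · rintro ⟨o, ho, rfl⟩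
    refine ⟨o * u⁻¹, L.O.mul_mem ho hu.2.1, ?_⟩
    field_simp [hu.2.2]

lemma unit_add {u m : F} (hu : unitO L u) (hm : Dv L L.ϖ m) : unitO L (u + m) := by
  have hmO : m ∈ L.O := by
    obtain ⟨o, ho, rfl⟩ := hm; exact L.O.mul_mem ho L.ϖ_mem
  rcases unit_or_pdvd L (L.O.add_mem hu.1 hmO) with h | h
  · exact h
  · exact absurd (by simpa using dv_sub L h hm) (fun h' => not_unit_pdvd L hu h')

lemma arch (x : F) (hx : x ≠ 0) : ∃ n : ℕ, ¬ Dv L (L.ϖ ^ n) x := by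
  by_contra h
  push_neg at h
  have hO : (L.O : Set F) ∈ nhds (0 : F) := by
    rw [L.nhds_zero]
    exact ⟨0, fun z hz => by obtain ⟨y, hy, rfl⟩ := hz; simpa using hy⟩
  have hc : ContinuousAt (fun y : F => x⁻¹ * y) 0 := (continuous_mul_left _).continuousAt
  have hpre : (fun y : F => x⁻¹ * y) ⁻¹' L.O ∈ nhds (0 : F) := by
    apply hc.preimage_mem_nhds
    simpa using hO
  obtain ⟨n, hn⟩ := (L.nhds_zero _).1 hpre
  have h1 : x⁻¹ * L.ϖ ^ n ∈ L.O := hn ⟨1, L.O.one_mem, (mul_one _).symm⟩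
  obtain ⟨y, hy, hxy⟩ := h (n + 1)
  have hy0 : y ≠ 0 := fun h' => hx (by rw [hxy, h', zero_mul])
  refine L.ϖ_not_unit ?_
  have he : L.ϖ⁻¹ = x⁻¹ * L.ϖ ^ n * y := by
    rw [hxy]
    have : (L.ϖ : F) ≠ 0 := L.ϖ_ne_zero
    field_simp
    ring
  rw [he]
  exact L.O.mul_mem h1 hy

lemma exists_pow_unit {x : F} (hx : x ∈ L.O) (h0 : x ≠ 0) :
    ∃ (n : ℕ) (u : F), unitO L u ∧ x = L.ϖ ^ n * u := by
  have ha := arch L x h0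
  have hspec : ¬ Dv L (L.ϖ ^ Nat.find ha) x := Nat.find_spec ha
  have hN0 : Nat.find ha ≠ 0 := by
    intro h
    exact hspec (by rw [h, pow_zero]; exact ⟨x, hx, (mul_one x).symm⟩)
  obtain ⟨m, hm⟩ : ∃ m, Nat.find ha = m + 1 :=
    ⟨Nat.find ha - 1, (Nat.succ_pred_eq_of_pos (Nat.pos_of_ne_zero hN0)).symm⟩
  have hdm : Dv L (L.ϖ ^ m) x := not_not.mp (Nat.find_min ha (by omega))
  obtain ⟨u, hu, hxu⟩ := hdm
  have hu0 : u ≠ 0 := fun h => h0 (by rw [hxu, h, zero_mul])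
  refine ⟨m, u, ⟨hu, ?_, hu0⟩, by rw [hxu]; ring⟩
  by_contra hui
  refine hspec ?_
  rw [hm]
  refine ⟨u / L.ϖ, L.ϖ_gen u hu hui, ?_⟩
  rw [hxu]
  have : (L.ϖ : F) ≠ 0 := L.ϖ_ne_zero
  field_simp
  ring

end St13

namespace St13

open Matrix

variable {F : Type} [Field F] [TopologicalSpace F] [IsTopologicalRing F]

/-- Entry of a `GL₂` element. -/
abbrev mE (g : GL (Fin 2) F) (i j : Fin 2) : F := (g : Matrix (Fin 2) (Fin 2) F) i j

lemma mulE (g h : GL (Fin 2) F) (i j : Fin 2) :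
    mE (g * h) i j = mE g i 0 * mE h 0 j + mE g i 1 * mE h 1 j := by
  show ((g * h : GL (Fin 2) F) : Matrix (Fin 2) (Fin 2) F) i j = _
  rw [Units.val_mul, Matrix.mul_apply, Fin.sum_univ_two]

lemma val_eta (g : GL (Fin 2) F) :
    (g : Matrix (Fin 2) (Fin 2) F) = !![mE g 0 0, mE g 0 1; mE g 1 0, mE g 1 1] :=
  Matrix.eta_fin_two _

lemma det_mul_det_inv (g : GL (Fin 2) F) :
    (g : Matrix (Fin 2) (Fin 2) F).det * ((g⁻¹ : GL (Fin 2) F) : Matrix (Fin 2) (Fin 2) F).det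
      = 1 := by
  rw [← Matrix.det_mul, ← Units.val_mul, mul_inv_cancel, Units.val_one, Matrix.det_one]

lemma det_ne_zero (g : GL (Fin 2) F) : (g : Matrix (Fin 2) (Fin 2) F).det ≠ 0 :=
  left_ne_zero_of_mul_eq_one (det_mul_det_inv g)

lemma det_inv_eq (g : GL (Fin 2) F) :
    ((g⁻¹ : GL (Fin 2) F) : Matrix (Fin 2) (Fin 2) F).det
      = ((g : Matrix (Fin 2) (Fin 2) F).det)⁻¹ :=
  eq_inv_of_mul_eq_one_left (by rw [mul_comm]; exact det_mul_det_inv g)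

lemma inv_val (g : GL (Fin 2) F) :
    ((g⁻¹ : GL (Fin 2) F) : Matrix (Fin 2) (Fin 2) F)
      = ((g : Matrix (Fin 2) (Fin 2) F).det)⁻¹ •
        !![mE g 1 1, -(mE g 0 1); -(mE g 1 0), mE g 0 0] := by
  rw [Matrix.coe_units_inv, Matrix.inv_def, Ring.inverse_eq_inv', ← Matrix.adjugate_fin_two_of,
    ← val_eta]

lemma det_expand (g : GL (Fin 2) F) :
    (g : Matrix (Fin 2) (Fin 2) F).det = mE g 0 0 * mE g 1 1 - mE g 0 1 * mE g 1 0 :=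
  Matrix.det_fin_two _

/-- Explicit two-by-two invertible matrix. -/
def mk2 (a b c d : F) (h : a * d - b * c ≠ 0) : GL (Fin 2) F :=
  Matrix.GeneralLinearGroup.mkOfDetNeZero !![a, b; c, d]
    (by rw [Matrix.det_fin_two_of]; exact h)

lemma mk2_val (a b c d : F) (h : a * d - b * c ≠ 0) :
    (mk2 a b c d h : Matrix (Fin 2) (Fin 2) F) = !![a, b; c, d] := rfl

variable (L : NALF F)

lemma K_entries {k : GL (Fin 2) F} (hk : k ∈ Kgr F L.O) :
    (∀ i j, mE k i j ∈ L.O) ∧ (∀ i j, mE (k⁻¹ : GL (Fin 2) F) i j ∈ L.O) := hk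

lemma K_det_unit {k : GL (Fin 2) F} (hk : k ∈ Kgr F L.O) :
    unitO L ((k : Matrix (Fin 2) (Fin 2) F).det) := by
  refine ⟨?_, ?_, det_ne_zero k⟩
  · rw [det_expand]
    exact L.O.sub_mem (L.O.mul_mem (hk.1 0 0) (hk.1 1 1)) (L.O.mul_mem (hk.1 0 1) (hk.1 1 0))
  · rw [← det_inv_eq, det_expand]
    exact L.O.sub_mem (L.O.mul_mem (hk.2 0 0) (hk.2 1 1)) (L.O.mul_mem (hk.2 0 1) (hk.2 1 0))

lemma mem_K_of {a b c d : F} (ha : a ∈ L.O) (hb : b ∈ L.O) (hc : c ∈ L.O) (hd : d ∈ L.O)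
    (hdi : (a * d - b * c)⁻¹ ∈ L.O) (h : a * d - b * c ≠ 0) :
    mk2 a b c d h ∈ Kgr F L.O := by
  have hdet : ((mk2 a b c d h : GL (Fin 2) F) : Matrix (Fin 2) (Fin 2) F).det = a * d - b * c := by
    rw [mk2_val, Matrix.det_fin_two_of]
  constructor
  · intro i j
    fin_cases i <;> fin_cases j <;> simpa [mk2_val] using ‹_›
  · intro i j
    rw [inv_val, hdet]
    fin_cases i <;> fin_cases j <;>
      simp [mk2_val, Matrix.smul_apply] <;>
      first
        | exact L.O.mul_mem hdi ‹_›
        | exact L.O.neg_mem (L.O.mul_mem hdi ‹_›)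
        | exact L.O.mul_mem hdi (L.O.neg_mem ‹_›)

end St13

namespace St13
variable {F : Type} [Field F] [TopologicalSpace F] [IsTopologicalRing F]
@[simp] lemma mk2_e00 (a b c d : F) (h : a * d - b * c ≠ 0) : mE (mk2 a b c d h) 0 0 = a := rfl
@[simp] lemma mk2_e01 (a b c d : F) (h : a * d - b * c ≠ 0) : mE (mk2 a b c d h) 0 1 = b := rfl
@[simp] lemma mk2_e10 (a b c d : F) (h : a * d - b * c ≠ 0) : mE (mk2 a b c d h) 1 0 = c := rfl
@[simp] lemma mk2_e11 (a b c d : F) (h : a * d - b * c ≠ 0) : mE (mk2 a b c d h) 1 1 = d := rfl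
end St13

namespace St13

open Matrix

variable {F : Type} [Field F] [TopologicalSpace F] [IsTopologicalRing F] (L : NALF F)

lemma scalar_central (c : F) (h : c * c - 0 * 0 ≠ 0) :
    mk2 c 0 0 c h ∈ Subgroup.center (GL (Fin 2) F) := by
  rw [Subgroup.mem_center_iff]
  intro g
  apply Units.ext
  rw [Units.val_mul, Units.val_mul, mk2_val]
  have hsc : !![c, (0 : F); 0, c] = c • (1 : Matrix (Fin 2) (Fin 2) F) := by
    rw [Matrix.one_fin_two]
    ext i j
    fin_cases i <;> fin_cases j <;> simp
  rw [hsc, mul_smul_comm, smul_mul_assoc, mul_one, one_mul]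

lemma center_val {z : GL (Fin 2) F} (hz : z ∈ Subgroup.center (GL (Fin 2) F)) :
    ∃ c : F, c ≠ 0 ∧ (z : Matrix (Fin 2) (Fin 2) F) = !![c, 0; 0, c] := by
  have h1 := Subgroup.mem_center_iff.mp hz (mk2 (1 : F) 1 0 1 (by norm_num))
  have h2 := Subgroup.mem_center_iff.mp hz (mk2 (1 : F) 0 1 1 (by norm_num))
  have e1 : ∀ i j : Fin 2, mE (mk2 (1 : F) 1 0 1 (by norm_num) * z) i j
      = mE (z * mk2 (1 : F) 1 0 1 (by norm_num)) i j := fun i j => by rw [h1]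
  have e2 : ∀ i j : Fin 2, mE (mk2 (1 : F) 0 1 1 (by norm_num) * z) i j
      = mE (z * mk2 (1 : F) 0 1 1 (by norm_num)) i j := fun i j => by rw [h2]
  have q1 := e1 0 0
  have q2 := e1 0 1
  have q3 := e2 0 0
  rw [mulE, mulE] at q1 q2 q3
  simp [mE, mk2_val] at q1 q2 q3
  -- q1 : z00 + z10 = z00  (from (g z)00 = z00·1 + z10·? ...)
  have hz10 : mE z 1 0 = 0 := q1
  have hz01 : mE z 0 1 = 0 := q3
  have hzd : mE z 1 1 = mE z 0 0 := by
    have q2' : mE z 0 1 + mE z 1 1 = mE z 0 1 + mE z 0 0 := by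
      rw [q2]; ring
    exact add_left_cancel q2'
  refine ⟨mE z 0 0, ?_, ?_⟩
  · intro h0
    apply det_ne_zero z
    rw [det_expand, hz01, h0, zero_mul, zero_mul, sub_zero]
  · rw [val_eta z, hz10, hz01, hzd]

lemma tpow_val (n : ℕ) :
    ((tGL F L ^ n : GL (Fin 2) F) : Matrix (Fin 2) (Fin 2) F) = !![L.ϖ ^ n, 0; 0, 1] := by
  induction n with
  | zero => rw [pow_zero, pow_zero, Units.val_one, Matrix.one_fin_two]
  | succ n ih =>
      rw [pow_succ, Units.val_mul, ih, tGL_val, Matrix.mul_fin_two, pow_succ]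
      norm_num

lemma B0_facts {b : GL (Fin 2) F} (hb : b ∈ B0gr F L) :
    unitO L (mE b 0 0) ∧ unitO L (mE b 1 1) ∧ mE b 0 1 ∈ L.O ∧ mE b 1 0 = 0 := by
  obtain ⟨hB, hK⟩ := hb
  have h10 : mE b 1 0 = 0 := hB
  have hdet : (b : Matrix (Fin 2) (Fin 2) F).det = mE b 0 0 * mE b 1 1 := by
    rw [det_expand, h10, mul_zero, sub_zero]
  have hne := det_ne_zero b
  rw [hdet] at hne
  have h00 : mE b 0 0 ≠ 0 := left_ne_zero_of_mul hne
  have h11 : mE b 1 1 ≠ 0 := right_ne_zero_of_mul hne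
  have hi00 : mE (b⁻¹ : GL (Fin 2) F) 0 0 = (mE b 0 0)⁻¹ := by
    show ((b⁻¹ : GL (Fin 2) F) : Matrix (Fin 2) (Fin 2) F) 0 0 = (mE b 0 0)⁻¹
    rw [inv_val, hdet]
    simp
    try field_simp
    try ring
  have hi11 : mE (b⁻¹ : GL (Fin 2) F) 1 1 = (mE b 1 1)⁻¹ := by
    show ((b⁻¹ : GL (Fin 2) F) : Matrix (Fin 2) (Fin 2) F) 1 1 = (mE b 1 1)⁻¹
    rw [inv_val, hdet]
    simp
    try field_simp
    try ring
  exact ⟨⟨hK.1 0 0, hi00 ▸ hK.2 0 0, h00⟩, ⟨hK.1 1 1, hi11 ▸ hK.2 1 1, h11⟩, hK.1 0 1, h10⟩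

lemma bplus_entries {b : GL (Fin 2) F} (hb : b ∈ BplusGL F L) :
    mE b 1 0 = 0 ∧ Dv L (mE b 1 1) (mE b 0 0) ∧ Dv L (mE b 1 1) (mE b 0 1) := by
  obtain ⟨b', hb', n, rfl⟩ := hb
  obtain ⟨b0, hb0, z, hz, rfl⟩ := hb'
  obtain ⟨hu00, hu11, h01O, h10⟩ := B0_facts L hb0
  obtain ⟨c, hc0, hcval⟩ := center_val hz
  have hval : ((b0 * z * tGL F L ^ n : GL (Fin 2) F) : Matrix (Fin 2) (Fin 2) F)
      = !![mE b0 0 0 * c * L.ϖ ^ n, mE b0 0 1 * c; 0, mE b0 1 1 * c] := by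
    rw [Units.val_mul, Units.val_mul, hcval, tpow_val, val_eta b0, h10,
      Matrix.mul_fin_two, Matrix.mul_fin_two]
    norm_num
  constructor
  · show ((b0 * z * tGL F L ^ n : GL (Fin 2) F) : Matrix (Fin 2) (Fin 2) F) 1 0 = 0
    rw [hval]; simp
  constructor
  · show Dv L (((b0 * z * tGL F L ^ n : GL (Fin 2) F) : Matrix (Fin 2) (Fin 2) F) 1 1)
      (((b0 * z * tGL F L ^ n : GL (Fin 2) F) : Matrix (Fin 2) (Fin 2) F) 0 0)
    rw [hval]
    refine ⟨mE b0 0 0 * (mE b0 1 1)⁻¹ * L.ϖ ^ n,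
      L.O.mul_mem (L.O.mul_mem hu00.1 hu11.2.1) (Subring.pow_mem _ L.ϖ_mem n), ?_⟩
    simp
    field_simp [hu11.2.2]
  · show Dv L (((b0 * z * tGL F L ^ n : GL (Fin 2) F) : Matrix (Fin 2) (Fin 2) F) 1 1)
      (((b0 * z * tGL F L ^ n : GL (Fin 2) F) : Matrix (Fin 2) (Fin 2) F) 0 1)
    rw [hval]
    refine ⟨mE b0 0 1 * (mE b0 1 1)⁻¹, L.O.mul_mem h01O hu11.2.1, ?_⟩
    simp
    field_simp [hu11.2.2]

lemma mem_bplus_of {b : GL (Fin 2) F} (h10 : mE b 1 0 = 0)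
    (h1 : Dv L (mE b 1 1) (mE b 0 0)) (h2 : Dv L (mE b 1 1) (mE b 0 1)) :
    b ∈ BplusGL F L := by
  have hdet : (b : Matrix (Fin 2) (Fin 2) F).det = mE b 0 0 * mE b 1 1 := by
    rw [det_expand, h10, mul_zero, sub_zero]
  have hne := det_ne_zero b
  rw [hdet] at hne
  have h00 : mE b 0 0 ≠ 0 := left_ne_zero_of_mul hne
  have h11 : mE b 1 1 ≠ 0 := right_ne_zero_of_mul hne
  obtain ⟨o, ho, hao⟩ := h1
  obtain ⟨o2, ho2, hxo⟩ := h2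
  have ho0 : o ≠ 0 := fun h => h00 (by rw [hao, h, zero_mul])
  obtain ⟨n, u, hu, hou⟩ := exists_pow_unit L ho ho0
  have hdetb0 : u * 1 - o2 * 0 ≠ 0 := by simpa using hu.2.2
  have hdetz : mE b 1 1 * mE b 1 1 - 0 * 0 ≠ 0 := by simpa using mul_ne_zero h11 h11
  refine ⟨mk2 u o2 0 1 hdetb0 * mk2 (mE b 1 1) 0 0 (mE b 1 1) hdetz,
    ⟨mk2 u o2 0 1 hdetb0, ⟨?_, ?_⟩, mk2 (mE b 1 1) 0 0 (mE b 1 1) hdetz,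
      scalar_central _ hdetz, rfl⟩, n, ?_⟩
  · show (mk2 u o2 0 1 hdetb0 : Matrix (Fin 2) (Fin 2) F) 1 0 = 0
    rw [mk2_val]; simp
  · refine mem_K_of L hu.1 ho2 L.O.zero_mem L.O.one_mem ?_ hdetb0
    simpa using hu.2.1
  · apply Units.ext
    have hbv : (b : Matrix (Fin 2) (Fin 2) F)
        = !![L.ϖ ^ n * u * mE b 1 1, o2 * mE b 1 1; 0, mE b 1 1] := by
      rw [val_eta b, h10, hao, hxo, hou]
    rw [Units.val_mul, Units.val_mul, tpow_val, mk2_val, mk2_val, hbv, Matrix.mul_fin_two,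
      Matrix.mul_fin_two]
    ext i j
    fin_cases i <;> fin_cases j <;> simp <;> try ring

end St13

namespace St13

open Matrix

variable {F : Type} [Field F] [TopologicalSpace F] [IsTopologicalRing F] (L : NALF F)

/-- The subset of `GL₂(F)` whose bottom row contains an entry dividing all entries. -/
def SetC (L : NALF F) : Set (GL (Fin 2) F) :=
  {g | ∃ p : F, (p = mE g 1 0 ∨ p = mE g 1 1) ∧
    Dv L p (mE g 0 0) ∧ Dv L p (mE g 0 1) ∧ Dv L p (mE g 1 0) ∧ Dv L p (mE g 1 1)}

lemma setC_pivot_all {g : GL (Fin 2) F} (hg : g ∈ SetC L) :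
    ∃ p : F, (p = mE g 1 0 ∨ p = mE g 1 1) ∧ ∀ i j, Dv L p (mE g i j) := by
  obtain ⟨p, hp, h1, h2, h3, h4⟩ := hg
  refine ⟨p, hp, fun i j => ?_⟩
  fin_cases i <;> fin_cases j <;> assumption

lemma mem_setC_of {g : GL (Fin 2) F} {p : F} (hp : p = mE g 1 0 ∨ p = mE g 1 1)
    (h : ∀ i j, Dv L p (mE g i j)) : g ∈ SetC L :=
  ⟨p, hp, h 0 0, h 0 1, h 1 0, h 1 1⟩

lemma setC_K_stable {g k : GL (Fin 2) F} (hg : g ∈ SetC L) (hk : k ∈ Kgr F L.O) :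
    g * k ∈ SetC L := by
  obtain ⟨p, _, hall⟩ := setC_pivot_all L hg
  have hdvnew : ∀ i j, Dv L p (mE (g * k) i j) := by
    intro i j
    rw [mulE]
    exact dv_add L (by rw [mul_comm]; exact dv_smul L _ (hk.1 0 j) (hall i 0))
      (by rw [mul_comm]; exact dv_smul L _ (hk.1 1 j) (hall i 1))
  have hback : ∀ i j, mE g i j
      = mE (g * k) i 0 * mE (k⁻¹ : GL (Fin 2) F) 0 j
        + mE (g * k) i 1 * mE (k⁻¹ : GL (Fin 2) F) 1 j := by
    intro i j
    have h1 : g = g * k * k⁻¹ := by rw [mul_assoc, mul_inv_cancel, mul_one]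
    conv_lhs => rw [h1]
    rw [mulE]
  rcases dv_total L (mE (g * k) 1 0) (mE (g * k) 1 1) with h | h
  · -- new bottom-left is the pivot
    refine mem_setC_of L (Or.inl rfl) (fun i j => ?_)
    have hq : ∀ j', Dv L (mE (g * k) 1 0) (mE g 1 j') := by
      intro j'
      rw [hback 1 j']
      exact dv_add L
        (by rw [mul_comm]; exact dv_smul L _ (hk.2 0 j') (dv_refl L _))
        (by rw [mul_comm]; exact dv_smul L _ (hk.2 1 j') h)
    have hqp : Dv L (mE (g * k) 1 0) p := by
      rcases ‹p = mE g 1 0 ∨ p = mE g 1 1› with rfl | rfl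
      · exact hq 0
      · exact hq 1
    exact dv_trans L hqp (hdvnew i j)
  · refine mem_setC_of L (Or.inr rfl) (fun i j => ?_)
    have hq : ∀ j', Dv L (mE (g * k) 1 1) (mE g 1 j') := by
      intro j'
      rw [hback 1 j']
      exact dv_add L
        (by rw [mul_comm]; exact dv_smul L _ (hk.2 0 j') h)
        (by rw [mul_comm]; exact dv_smul L _ (hk.2 1 j') (dv_refl L _))
    have hqp : Dv L (mE (g * k) 1 1) p := by
      rcases ‹p = mE g 1 0 ∨ p = mE g 1 1› with rfl | rfl
      · exact hq 0
      · exact hq 1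
    exact dv_trans L hqp (hdvnew i j)

lemma setC_pivot_ne {g : GL (Fin 2) F} {p : F} (hall : ∀ i j, Dv L p (mE g i j)) : p ≠ 0 := by
  intro h0
  subst h0
  apply det_ne_zero g
  rw [det_expand, dv_zero_left L (hall 0 0), dv_zero_left L (hall 0 1)]
  ring

/-- Iwasawa decomposition: right translate into the Borel. -/
lemma iwasawa (g : GL (Fin 2) F) :
    ∃ k ∈ Kgr F L.O, mE (g * k) 1 0 = 0 := by
  rcases dv_total L (mE g 1 1) (mE g 1 0) with ⟨o, ho, hod⟩ | ⟨o, ho, hod⟩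
  · -- bottom-right divides bottom-left : column elimination
    have h : (1 : F) * 1 - 0 * (-o) ≠ 0 := by norm_num
    refine ⟨mk2 1 0 (-o) 1 h, mem_K_of L L.O.one_mem L.O.zero_mem (L.O.neg_mem ho)
      L.O.one_mem (by norm_num) h, ?_⟩
    rw [mulE]
    simp
    rw [hod]; ring
  · -- bottom-left divides bottom-right : swap and eliminate
    have h : (-o) * 0 - 1 * 1 ≠ 0 := by norm_num
    refine ⟨mk2 (-o) 1 1 0 h, mem_K_of L (L.O.neg_mem ho) L.O.one_mem L.O.one_mem
      L.O.zero_mem (by norm_num) h, ?_⟩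
    rw [mulE]
    simp
    rw [hod]; ring

/-- Claim A: `B⁺ K = SetC`. -/
lemma bplusK_eq_setC :
    BplusGL F L * (Kgr F L.O : Set (GL (Fin 2) F)) = SetC L := by
  ext g
  constructor
  · intro hmem
    rw [Set.mem_mul] at hmem
    obtain ⟨b, hb, k, hk, rfl⟩ := hmem
    obtain ⟨h10, h00, h01⟩ := bplus_entries L hb
    refine setC_K_stable L ?_ hk
    exact ⟨mE b 1 1, Or.inr rfl, h00, h01, h10 ▸ dv_zero L _, dv_refl L _⟩
  · intro hg
    obtain ⟨p, hp, hall⟩ := setC_pivot_all L hg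
    have hpne : p ≠ 0 := setC_pivot_ne L hall
    rcases hp with hp | hp
    · -- pivot is bottom-left entry : swap-eliminate
      obtain ⟨o, ho, hod⟩ := hall 1 1
      have h : (-o) * 0 - 1 * 1 ≠ 0 := by norm_num
      set k : GL (Fin 2) F := mk2 (-o) 1 1 0 h with hkdef
      have hkK : k ∈ Kgr F L.O := mem_K_of L (L.O.neg_mem ho) L.O.one_mem L.O.one_mem
        L.O.zero_mem (by norm_num) h
      have e10 : mE (g * k) 1 0 = 0 := by
        rw [mulE]; simp [hkdef]; rw [hod, hp]; ring
      have e11 : mE (g * k) 1 1 = mE g 1 0 := by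
        rw [mulE]; simp [hkdef]
      have e00 : mE (g * k) 0 0 = mE g 0 1 - o * mE g 0 0 := by
        rw [mulE]; simp [hkdef]; ring
      have e01 : mE (g * k) 0 1 = mE g 0 0 := by
        rw [mulE]; simp [hkdef]
      have hbB : g * k ∈ BplusGL F L := by
        apply mem_bplus_of L e10
        · rw [e11, e00, ← hp]
          exact dv_sub L (hall 0 1) (dv_smul L _ ho (hall 0 0))
        · rw [e11, e01, ← hp]; exact hall 0 0
      rw [Set.mem_mul]
      exact ⟨g * k, hbB, k⁻¹, (Kgr F L.O).inv_mem hkK, by rw [mul_assoc, mul_inv_cancel, mul_one]⟩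
    · -- pivot is bottom-right entry : eliminate
      obtain ⟨o, ho, hod⟩ := hall 1 0
      have h : (1 : F) * 1 - 0 * (-o) ≠ 0 := by norm_num
      set k : GL (Fin 2) F := mk2 1 0 (-o) 1 h with hkdef
      have hkK : k ∈ Kgr F L.O := mem_K_of L L.O.one_mem L.O.zero_mem (L.O.neg_mem ho)
        L.O.one_mem (by norm_num) h
      have e10 : mE (g * k) 1 0 = 0 := by
        rw [mulE]; simp [hkdef]; rw [hod, hp]; ring
      have e11 : mE (g * k) 1 1 = mE g 1 1 := by
        rw [mulE]; simp [hkdef]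
      have e00 : mE (g * k) 0 0 = mE g 0 0 - o * mE g 0 1 := by
        rw [mulE]; simp [hkdef]; ring
      have e01 : mE (g * k) 0 1 = mE g 0 1 := by
        rw [mulE]; simp [hkdef]
      have hbB : g * k ∈ BplusGL F L := by
        apply mem_bplus_of L e10
        · rw [e11, e00, ← hp]
          exact dv_sub L (hall 0 0) (dv_smul L _ ho (hall 0 1))
        · rw [e11, e01, ← hp]; exact hall 0 1
      rw [Set.mem_mul]
      exact ⟨g * k, hbB, k⁻¹, (Kgr F L.O).inv_mem hkK, by rw [mul_assoc, mul_inv_cancel, mul_one]⟩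

end St13

namespace St13

open Matrix

variable {F : Type} [Field F] [TopologicalSpace F] [IsTopologicalRing F] (L : NALF F)

@[simp] lemma omega_e00 : mE (ωGL F L) 0 0 = 0 := by simp [mE, ωGL_val]
@[simp] lemma omega_e01 : mE (ωGL F L) 0 1 = 1 := by simp [mE, ωGL_val]
@[simp] lemma omega_e10 : mE (ωGL F L) 1 0 = L.ϖ := by simp [mE, ωGL_val]
@[simp] lemma omega_e11 : mE (ωGL F L) 1 1 = 0 := by simp [mE, ωGL_val]

lemma omega_det : ((ωGL F L : GL (Fin 2) F) : Matrix (Fin 2) (Fin 2) F).det = -L.ϖ := by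
  rw [det_expand]
  simp

lemma omega_inv_val :
    (((ωGL F L)⁻¹ : GL (Fin 2) F) : Matrix (Fin 2) (Fin 2) F) = !![0, L.ϖ⁻¹; 1, 0] := by
  rw [inv_val, omega_det]
  have hϖ := L.ϖ_ne_zero
  ext i j
  fin_cases i <;> fin_cases j <;> simp <;> field_simp <;>
    try exact div_self L.ϖ_ne_zero

@[simp] lemma omega_inv_e00 : mE ((ωGL F L)⁻¹ : GL (Fin 2) F) 0 0 = 0 := by
  show (((ωGL F L)⁻¹ : GL (Fin 2) F) : Matrix (Fin 2) (Fin 2) F) 0 0 = 0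
  rw [omega_inv_val]; simp
@[simp] lemma omega_inv_e01 : mE ((ωGL F L)⁻¹ : GL (Fin 2) F) 0 1 = L.ϖ⁻¹ := by
  show (((ωGL F L)⁻¹ : GL (Fin 2) F) : Matrix (Fin 2) (Fin 2) F) 0 1 = L.ϖ⁻¹
  rw [omega_inv_val]; simp
@[simp] lemma omega_inv_e10 : mE ((ωGL F L)⁻¹ : GL (Fin 2) F) 1 0 = 1 := by
  show (((ωGL F L)⁻¹ : GL (Fin 2) F) : Matrix (Fin 2) (Fin 2) F) 1 0 = 1
  rw [omega_inv_val]; simp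
@[simp] lemma omega_inv_e11 : mE ((ωGL F L)⁻¹ : GL (Fin 2) F) 1 1 = 0 := by
  show (((ωGL F L)⁻¹ : GL (Fin 2) F) : Matrix (Fin 2) (Fin 2) F) 1 1 = 0
  rw [omega_inv_val]; simp

lemma omega_mul_entries (g : GL (Fin 2) F) :
    mE ((ωGL F L)⁻¹ * g) 0 0 = L.ϖ⁻¹ * mE g 1 0 ∧
    mE ((ωGL F L)⁻¹ * g) 0 1 = L.ϖ⁻¹ * mE g 1 1 ∧
    mE ((ωGL F L)⁻¹ * g) 1 0 = mE g 0 0 ∧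
    mE ((ωGL F L)⁻¹ * g) 1 1 = mE g 0 1 := by
  refine ⟨?_, ?_, ?_, ?_⟩ <;> (rw [mulE]; simp)

lemma dv_inv_p (x y : F) : Dv L x (L.ϖ⁻¹ * y) ↔ Dv L (L.ϖ * x) y := by
  constructor
  · rintro ⟨o, ho, he⟩
    refine ⟨o, ho, ?_⟩
    have h2 : y = L.ϖ * (L.ϖ⁻¹ * y) := by
      rw [← mul_assoc, mul_inv_cancel₀ L.ϖ_ne_zero, one_mul]
    rw [h2, he]; ring
  · rintro ⟨o, ho, he⟩
    refine ⟨o, ho, ?_⟩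
    rw [he, ← mul_assoc, ← mul_assoc, mul_comm L.ϖ⁻¹ o, mul_assoc o L.ϖ⁻¹ L.ϖ,
      inv_mul_cancel₀ L.ϖ_ne_zero, mul_one]

lemma dichotomy {g : GL (Fin 2) F} (hg : g ∉ SetC L) : (ωGL F L)⁻¹ * g ∈ SetC L := by
  obtain ⟨e00, e01, e10, e11⟩ := omega_mul_entries L g
  have hC1 : ¬ (Dv L (mE g 1 1) (mE g 0 0) ∧ Dv L (mE g 1 1) (mE g 0 1)
      ∧ Dv L (mE g 1 1) (mE g 1 0)) := fun ⟨h1, h2, h3⟩ =>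
    hg ⟨mE g 1 1, Or.inr rfl, h1, h2, h3, dv_refl L _⟩
  have hC2 : ¬ (Dv L (mE g 1 0) (mE g 0 0) ∧ Dv L (mE g 1 0) (mE g 0 1)
      ∧ Dv L (mE g 1 0) (mE g 1 1)) := fun ⟨h1, h2, h3⟩ =>
    hg ⟨mE g 1 0, Or.inl rfl, h1, h2, dv_refl L _, h3⟩
  have mkD1 : Dv L (mE g 0 1) (mE g 0 0) → Dv L (L.ϖ * mE g 0 1) (mE g 1 0) →
      Dv L (L.ϖ * mE g 0 1) (mE g 1 1) → (ωGL F L)⁻¹ * g ∈ SetC L := by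
    intro h1 h2 h3
    refine ⟨mE g 0 1, Or.inr e11.symm, ?_, ?_, ?_, ?_⟩
    · rw [e00]; exact (dv_inv_p L _ _).2 h2
    · rw [e01]; exact (dv_inv_p L _ _).2 h3
    · rw [e10]; exact h1
    · rw [e11]; exact dv_refl L _
  have mkD2 : Dv L (mE g 0 0) (mE g 0 1) → Dv L (L.ϖ * mE g 0 0) (mE g 1 0) →
      Dv L (L.ϖ * mE g 0 0) (mE g 1 1) → (ωGL F L)⁻¹ * g ∈ SetC L := by
    intro h1 h2 h3
    refine ⟨mE g 0 0, Or.inl e10.symm, ?_, ?_, ?_, ?_⟩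
    · rw [e00]; exact (dv_inv_p L _ _).2 h2
    · rw [e01]; exact (dv_inv_p L _ _).2 h3
    · rw [e10]; exact dv_refl L _
    · rw [e11]; exact h1
  rcases dv_total L (mE g 1 1) (mE g 1 0) with hdg | hgd
  · rcases dv_total L (mE g 0 0) (mE g 0 1) with hab | hba
    · -- α divides β : use D2
      have hda : ¬ Dv L (mE g 1 1) (mE g 0 0) := fun h =>
        hC1 ⟨h, dv_trans L h hab, hdg⟩
      have hs : Dv L (L.ϖ * mE g 0 0) (mE g 1 1) := dv_strict L hda
      exact mkD2 hab (dv_trans L hs hdg) hs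
    · have hdb : ¬ Dv L (mE g 1 1) (mE g 0 1) := fun h =>
        hC1 ⟨dv_trans L h hba, h, hdg⟩
      have hs : Dv L (L.ϖ * mE g 0 1) (mE g 1 1) := dv_strict L hdb
      exact mkD1 hba (dv_trans L hs hdg) hs
  · rcases dv_total L (mE g 0 0) (mE g 0 1) with hab | hba
    · have hga : ¬ Dv L (mE g 1 0) (mE g 0 0) := fun h =>
        hC2 ⟨h, dv_trans L h hab, hgd⟩
      have hs : Dv L (L.ϖ * mE g 0 0) (mE g 1 0) := dv_strict L hga
      exact mkD2 hab hs (dv_trans L hs hgd)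
    · have hgb : ¬ Dv L (mE g 1 0) (mE g 0 1) := fun h =>
        hC2 ⟨dv_trans L h hba, h, hgd⟩
      have hs : Dv L (L.ϖ * mE g 0 1) (mE g 1 0) := dv_strict L hgb
      exact mkD1 hba hs (dv_trans L hs hgd)

lemma disjoint_core {g : GL (Fin 2) F} (h1 : g ∈ SetC L)
    (h2 : (ωGL F L)⁻¹ * g ∈ SetC L) : False := by
  obtain ⟨e00, e01, e10, e11⟩ := omega_mul_entries L g
  obtain ⟨p, hp, hap⟩ := setC_pivot_all L h1
  obtain ⟨q, hq, haq⟩ := setC_pivot_all L h2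
  have hq0 : q ≠ 0 := setC_pivot_ne L haq
  have hpq : Dv L p q := by
    rcases hq with rfl | rfl
    · rw [e10]; exact hap 0 0
    · rw [e11]; exact hap 0 1
  have hqp : Dv L (L.ϖ * q) p := by
    rcases hp with rfl | rfl
    · have h := haq 0 0; rw [e00] at h; exact (dv_inv_p L _ _).1 h
    · have h := haq 0 1; rw [e01] at h; exact (dv_inv_p L _ _).1 h
  obtain ⟨o1, ho1, he1⟩ := hpq
  obtain ⟨o2, ho2, he2⟩ := hqp
  have h3 : q = (o1 * o2 * L.ϖ) * q := by
    conv_lhs => rw [he1, he2]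
    ring
  have h4 : (1 : F) = o1 * o2 * L.ϖ :=
    mul_right_cancel₀ hq0 (by rw [one_mul]; exact h3)
  have h5 : L.ϖ⁻¹ = o1 * o2 := by
    have hϖ := L.ϖ_ne_zero
    field_simp
    linear_combination h4
  exact L.ϖ_not_unit (h5 ▸ L.O.mul_mem ho1 ho2)

lemma bplus_mem_setC {b : GL (Fin 2) F} (hb : b ∈ BplusGL F L) : b ∈ SetC L := by
  obtain ⟨h10, h00, h01⟩ := bplus_entries L hb
  exact ⟨mE b 1 1, Or.inr rfl, h00, h01, h10 ▸ dv_zero L _, dv_refl L _⟩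

lemma B_not_plus_not_setC {b : GL (Fin 2) F} (h10 : mE b 1 0 = 0)
    (hb : b ∉ BplusGL F L) : b ∉ SetC L := by
  intro hC
  obtain ⟨p, hp, hall⟩ := setC_pivot_all L hC
  have hpne := setC_pivot_ne L hall
  rcases hp with rfl | rfl
  · exact hpne h10
  · exact hb (mem_bplus_of L h10 (hall 0 0) (hall 0 1))

lemma I_unit_diag {i : GL (Fin 2) F} (hi : i ∈ Iset F L) :
    unitO L (mE i 0 0) ∧ unitO L (mE i 1 1) := by
  obtain ⟨hiK, y, hy, h10⟩ := hi
  have h10' : mE i 1 0 = L.ϖ * y := h10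
  have hdetu := K_det_unit L hiK
  have hdio : Dv L L.ϖ (mE i 0 1 * mE i 1 0) :=
    ⟨mE i 0 1 * y, L.O.mul_mem (hiK.1 0 1) hy, by rw [h10']; ring⟩
  constructor
  · rcases unit_or_pdvd L (hiK.1 0 0) with h | h
    · exact h
    · exfalso
      refine not_unit_pdvd L hdetu ?_
      rw [det_expand]
      refine dv_sub L ?_ hdio
      rw [mul_comm]
      exact dv_smul L _ (hiK.1 1 1) h
  · rcases unit_or_pdvd L (hiK.1 1 1) with h | h
    · exact h
    · exfalso
      refine not_unit_pdvd L hdetu ?_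
      rw [det_expand]
      refine dv_sub L ?_ hdio
      exact dv_smul L _ (hiK.1 0 0) h

lemma I_stab {i g : GL (Fin 2) F} (hi : i ∈ Iset F L) (hg : g ∈ SetC L) :
    i * g ∈ SetC L := by
  have hD : unitO L (mE i 1 1) := (I_unit_diag L hi).2
  obtain ⟨hiK, y, hy, h10⟩ := hi
  have h10' : mE i 1 0 = L.ϖ * y := h10
  obtain ⟨p, hp, hall⟩ := setC_pivot_all L hg
  have hnew : ∀ a b', Dv L p (mE (i * g) a b') := fun a b' => by
    rw [mulE]
    exact dv_add L (dv_smul L _ (hiK.1 a 0) (hall 0 b'))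
      (dv_smul L _ (hiK.1 a 1) (hall 1 b'))
  rcases hp with hp | hp
  · -- pivot is bottom-left of g
    obtain ⟨o1, ho1, he1⟩ := hall 0 0
    have hu : unitO L (mE i 1 1 + mE i 1 0 * o1) :=
      unit_add L hD ⟨y * o1, L.O.mul_mem hy ho1, by rw [h10']; ring⟩
    have e10' : mE (i * g) 1 0 = (mE i 1 1 + mE i 1 0 * o1) * p := by
      rw [mulE, he1, ← hp]
      ring
    refine mem_setC_of L (Or.inl rfl) (fun a b' => ?_)
    rw [e10']
    exact (dv_unit_iff L hu _ _).2 (hnew a b')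
  · -- pivot is bottom-right of g
    obtain ⟨o2, ho2, he2⟩ := hall 0 1
    have hu : unitO L (mE i 1 1 + mE i 1 0 * o2) :=
      unit_add L hD ⟨y * o2, L.O.mul_mem hy ho2, by rw [h10']; ring⟩
    have e11' : mE (i * g) 1 1 = (mE i 1 1 + mE i 1 0 * o2) * p := by
      rw [mulE, he2, ← hp]
      ring
    refine mem_setC_of L (Or.inr rfl) (fun a b' => ?_)
    rw [e11']
    exact (dv_unit_iff L hu _ _).2 (hnew a b')

lemma conj_entries (M : GL (Fin 2) F) :
    mE ((ωGL F L)⁻¹ * M * ωGL F L) 0 0 = mE M 1 1 ∧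
    mE ((ωGL F L)⁻¹ * M * ωGL F L) 0 1 = L.ϖ⁻¹ * mE M 1 0 ∧
    mE ((ωGL F L)⁻¹ * M * ωGL F L) 1 0 = L.ϖ * mE M 0 1 ∧
    mE ((ωGL F L)⁻¹ * M * ωGL F L) 1 1 = mE M 0 0 := by
  obtain ⟨f00, f01, f10, f11⟩ := omega_mul_entries L M
  refine ⟨?_, ?_, ?_, ?_⟩
  · rw [mulE, f00, f01]
    simp
    rw [mul_comm, ← mul_assoc, mul_inv_cancel₀ L.ϖ_ne_zero, one_mul]
  · rw [mulE, f00, f01]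
    simp
  · rw [mulE, f10, f11]
    simp
    ring
  · rw [mulE, f10, f11]
    simp

lemma conj_Iset {i : GL (Fin 2) F} (hi : i ∈ Iset F L) :
    (ωGL F L)⁻¹ * i * ωGL F L ∈ Iset F L := by
  obtain ⟨hiK, y, hy, h10⟩ := hi
  have h10' : mE i 1 0 = L.ϖ * y := h10
  obtain ⟨c00, c01, c10, c11⟩ := conj_entries L i
  have hinv : ((ωGL F L)⁻¹ * i * ωGL F L)⁻¹ = (ωGL F L)⁻¹ * i⁻¹ * ωGL F L := by
    group
  obtain ⟨d00, d01, d10, d11⟩ := conj_entries L (i⁻¹ : GL (Fin 2) F)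
  have hdetu := K_det_unit L hiK
  have hi10 : mE (i⁻¹ : GL (Fin 2) F) 1 0 = ((i : Matrix (Fin 2) (Fin 2) F).det)⁻¹
      * (-(mE i 1 0)) := by
    show ((i⁻¹ : GL (Fin 2) F) : Matrix (Fin 2) (Fin 2) F) 1 0 = _
    rw [inv_val]
    simp
  have hval : L.ϖ⁻¹ * mE (i⁻¹ : GL (Fin 2) F) 1 0 ∈ L.O := by
    rw [hi10, h10']
    have he : L.ϖ⁻¹ * (((i : Matrix (Fin 2) (Fin 2) F).det)⁻¹ * (-(L.ϖ * y)))
        = ((i : Matrix (Fin 2) (Fin 2) F).det)⁻¹ * (-y) := by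
      have hϖ := L.ϖ_ne_zero
      have hdet := det_ne_zero i
      field_simp
    rw [he]
    exact L.O.mul_mem hdetu.2.1 (L.O.neg_mem hy)
  refine ⟨⟨?_, ?_⟩, mE i 0 1, hiK.1 0 1, c10⟩
  · intro a b'
    fin_cases a <;> fin_cases b'
    · show mE ((ωGL F L)⁻¹ * i * ωGL F L) 0 0 ∈ L.O
      rw [c00]; exact hiK.1 1 1
    · show mE ((ωGL F L)⁻¹ * i * ωGL F L) 0 1 ∈ L.O
      rw [c01, h10', ← mul_assoc, inv_mul_cancel₀ L.ϖ_ne_zero, one_mul]; exact hy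
    · show mE ((ωGL F L)⁻¹ * i * ωGL F L) 1 0 ∈ L.O
      rw [c10]; exact L.O.mul_mem L.ϖ_mem (hiK.1 0 1)
    · show mE ((ωGL F L)⁻¹ * i * ωGL F L) 1 1 ∈ L.O
      rw [c11]; exact hiK.1 0 0
  · intro a b'
    rw [hinv]
    fin_cases a <;> fin_cases b'
    · show mE ((ωGL F L)⁻¹ * (i⁻¹ : GL (Fin 2) F) * ωGL F L) 0 0 ∈ L.O
      rw [d00]; exact hiK.2 1 1
    · show mE ((ωGL F L)⁻¹ * (i⁻¹ : GL (Fin 2) F) * ωGL F L) 0 1 ∈ L.O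
      rw [d01]; exact hval
    · show mE ((ωGL F L)⁻¹ * (i⁻¹ : GL (Fin 2) F) * ωGL F L) 1 0 ∈ L.O
      rw [d10]; exact L.O.mul_mem L.ϖ_mem (hiK.2 0 1)
    · show mE ((ωGL F L)⁻¹ * (i⁻¹ : GL (Fin 2) F) * ωGL F L) 1 1 ∈ L.O
      rw [d11]; exact hiK.2 0 0

lemma mem_omega_iff (g : GL (Fin 2) F) :
    g ∈ ({ωGL F L} : Set (GL (Fin 2) F)) * (BplusGL F L * (Kgr F L.O : Set (GL (Fin 2) F)))
      ↔ (ωGL F L)⁻¹ * g ∈ SetC L := by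
  rw [← bplusK_eq_setC]
  constructor
  · intro h
    rw [Set.mem_mul] at h
    obtain ⟨w, hw, x, hx, rfl⟩ := h
    rw [Set.mem_singleton_iff] at hw
    subst hw
    rwa [← mul_assoc, inv_mul_cancel, one_mul]
  · intro h
    rw [Set.mem_mul]
    exact ⟨ωGL F L, Set.mem_singleton _, (ωGL F L)⁻¹ * g, h,
      by rw [← mul_assoc, mul_inv_cancel, one_mul]⟩

end St13

end St13Aux

/-- `(B - B⁺) K = ω B⁺ K`, `G` is the disjoint union of `B⁺K` and
`ω B⁺ K`, and both parts are stable under left multiplication by the Iwahori subgroup. -/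
theorem statement13
    (F : Type) [Field F] [TopologicalSpace F] [IsTopologicalRing F] (LF : NALF F)
    :
    ((Bgr F : Set (GL (Fin 2) F)) \ BplusGL F LF) * (Kgr F LF.O : Set (GL (Fin 2) F))
      = ({ωGL F LF} : Set (GL (Fin 2) F)) * (BplusGL F LF * (Kgr F LF.O : Set (GL (Fin 2) F))) ∧
    (BplusGL F LF * (Kgr F LF.O : Set (GL (Fin 2) F)))
        ∪ (({ωGL F LF} : Set (GL (Fin 2) F)) * (BplusGL F LF * (Kgr F LF.O : Set (GL (Fin 2) F))))
      = Set.univ ∧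
    Disjoint (BplusGL F LF * (Kgr F LF.O : Set (GL (Fin 2) F)))
      (({ωGL F LF} : Set (GL (Fin 2) F)) * (BplusGL F LF * (Kgr F LF.O : Set (GL (Fin 2) F)))) ∧
    (∀ i ∈ Iset F LF, ∀ g ∈ BplusGL F LF * (Kgr F LF.O : Set (GL (Fin 2) F)),
      i * g ∈ BplusGL F LF * (Kgr F LF.O : Set (GL (Fin 2) F))) ∧
    (∀ i ∈ Iset F LF,
      ∀ g ∈ ({ωGL F LF} : Set (GL (Fin 2) F)) * (BplusGL F LF * (Kgr F LF.O : Set (GL (Fin 2) F))),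
      i * g ∈ ({ωGL F LF} : Set (GL (Fin 2) F)) * (BplusGL F LF * (Kgr F LF.O : Set (GL (Fin 2) F)))) := by
  constructor
  · -- (1) `(B - B⁺) K = ω B⁺ K`
    ext g
    constructor
    · intro hmem
      rw [Set.mem_mul] at hmem
      obtain ⟨b, hb, k, hk, rfl⟩ := hmem
      rw [St13.mem_omega_iff]
      have h10 : St13.mE b 1 0 = 0 := hb.1
      have hnC : b ∉ St13.SetC LF := St13.B_not_plus_not_setC LF h10 hb.2
      have h2 := St13.setC_K_stable LF (St13.dichotomy LF hnC) hk
      rwa [← mul_assoc]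
    · intro hmem
      have hω : (ωGL F LF)⁻¹ * g ∈ St13.SetC LF := (St13.mem_omega_iff LF g).1 hmem
      obtain ⟨k, hk, hgk10⟩ := St13.iwasawa LF g
      have hbnot : g * k ∉ BplusGL F LF := by
        intro hB
        have hgC : g ∈ St13.SetC LF := by
          have h2 := St13.setC_K_stable LF (St13.bplus_mem_setC LF hB)
            ((Kgr F LF.O).inv_mem hk)
          rwa [mul_assoc, mul_inv_cancel, mul_one] at h2
        exact St13.disjoint_core LF hgC hω
      rw [Set.mem_mul]
      exact ⟨g * k, ⟨hgk10, hbnot⟩, k⁻¹, (Kgr F LF.O).inv_mem hk,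
        by rw [mul_assoc, mul_inv_cancel, mul_one]⟩
  refine ⟨?_, ?_, ?_, ?_⟩
  · -- (2) union is everything
    apply Set.eq_univ_of_forall
    intro g
    by_cases h : g ∈ St13.SetC LF
    · exact Set.mem_union_left _ (by rw [St13.bplusK_eq_setC]; exact h)
    · exact Set.mem_union_right _ ((St13.mem_omega_iff LF g).2 (St13.dichotomy LF h))
  · -- (3) disjointness
    rw [Set.disjoint_left]
    intro g hg hg2
    have h1 : g ∈ St13.SetC LF := by rwa [St13.bplusK_eq_setC] at hg
    exact St13.disjoint_core LF h1 ((St13.mem_omega_iff LF g).1 hg2)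
  · -- (4) Iwahori stability of `B⁺K`
    intro i hi g hg
    rw [St13.bplusK_eq_setC] at hg ⊢
    exact St13.I_stab LF hi hg
  · -- (5) Iwahori stability of `ω B⁺ K`
    intro i hi g hg
    rw [St13.mem_omega_iff] at hg ⊢
    have he : (ωGL F LF)⁻¹ * (i * g)
        = ((ωGL F LF)⁻¹ * i * ωGL F LF) * ((ωGL F LF)⁻¹ * g) := by
      group
    rw [he]
    exact St13.I_stab LF (St13.conj_Iset LF hi) hg
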